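/- Let d ≥ 1 and let U = [U₁ U₂] and V = [V₁ V₂] be real orthogonal d×d matrices, partitioned columnwise so that U₂ consists of the last d−k columns of U and V₂ of the last d−k̄ columns of V (0 ≤ k, k̄ ≤ d). Let η ≥ 0 satisfy ‖V₁ᵀ U₂‖₂ ≤ η, and let z ∈ ℝᵈ with ‖z‖₂ ≤ 1. Then max{0, √(1 − η²) · ‖U₂ᵀ z‖₂ − η} ≤ ‖V₂ᵀ z‖₂, where √(1 − η²) is interpreted as 0 when η ≥ 1. -/

import Mathlib

open Matrix

/-- The spectral norm (ℓ₂→ℓ₂ operator norm, i.e. largest singular value) of a real matrix. -/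
noncomputable def specNorm {m n : Type*} [Fintype m] [Fintype n] [DecidableEq n]
    (A : Matrix m n ℝ) : ℝ :=
  ‖LinearMap.toContinuousLinearMap (Matrix.toEuclideanLin A)‖

/-- The Euclidean norm of a vector in `ℝᵈ`. -/
noncomputable def evNorm {n : Type*} [Fintype n] (v : n → ℝ) : ℝ :=
  Real.sqrt (∑ i, v i ^ 2)

namespace Stmt12Aux

lemma evNorm_nonneg {n : Type*} [Fintype n] (v : n → ℝ) : 0 ≤ evNorm v :=
  Real.sqrt_nonneg _

lemma evNorm_sq {n : Type*} [Fintype n] (v : n → ℝ) : evNorm v ^ 2 = v ⬝ᵥ v := by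
  rw [evNorm, Real.sq_sqrt (Finset.sum_nonneg fun i _ => sq_nonneg _)]
  simp [dotProduct, sq]

lemma dot_le {n : Type*} [Fintype n] (v w : n → ℝ) : v ⬝ᵥ w ≤ evNorm v * evNorm w := by
  have h := Finset.sum_mul_sq_le_sq_mul_sq Finset.univ v w
  calc v ⬝ᵥ w ≤ |∑ i, v i * w i| := le_abs_self _
    _ = Real.sqrt ((∑ i, v i * w i) ^ 2) := (Real.sqrt_sq_eq_abs _).symm
    _ ≤ Real.sqrt ((∑ i, v i ^ 2) * ∑ i, w i ^ 2) := Real.sqrt_le_sqrt h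
    _ = evNorm v * evNorm w := by
        rw [evNorm, evNorm, ← Real.sqrt_mul (Finset.sum_nonneg fun i _ => sq_nonneg _)]

lemma evNorm_eq_norm {n : Type*} [Fintype n] (v : n → ℝ) :
    evNorm v = ‖(WithLp.equiv 2 (n → ℝ)).symm v‖ := by
  rw [EuclideanSpace.norm_eq]
  simp [evNorm, sq_abs]

lemma evNorm_mulVec_le {m n : Type*} [Fintype m] [Fintype n] [DecidableEq n]
    (A : Matrix m n ℝ) (x : n → ℝ) :
    evNorm (A *ᵥ x) ≤ specNorm A * evNorm x := by
  rw [evNorm_eq_norm, evNorm_eq_norm]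
  show ‖WithLp.toLp 2 (A *ᵥ x)‖ ≤ _ * ‖WithLp.toLp 2 x‖
  rw [← Matrix.toEuclideanLin_apply_piLp_toLp]
  simpa [specNorm] using (LinearMap.toContinuousLinearMap (Matrix.toEuclideanLin A)).le_opNorm
    ((WithLp.equiv 2 (n → ℝ)).symm x)

lemma transpose_dot {m n : Type*} [Fintype m] [Fintype n]
    (A : Matrix m n ℝ) (x : m → ℝ) (w : n → ℝ) :
    (Aᵀ *ᵥ x) ⬝ᵥ w = x ⬝ᵥ (A *ᵥ w) := by
  rw [Matrix.mulVec_transpose, Matrix.dotProduct_mulVec]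

end Stmt12Aux

open Stmt12Aux

/-- deterministic content of Lemma 3 / Lemma Uz of the paper.
Let `U = [U₁ U₂]` and `V = [V₁ V₂]` be real orthogonal `d × d` matrices partitioned
columnwise (`U₂` the last `d − k` columns, `V₂` the last `d − k̄` columns), let `η ≥ 0`
satisfy `‖V₁ᵀ U₂‖₂ ≤ η`, and let `z ∈ ℝᵈ` with `‖z‖₂ ≤ 1`. Then
`max {0, √(1 − η²) ‖U₂ᵀ z‖₂ − η} ≤ ‖V₂ᵀ z‖₂`
(`Real.sqrt` of a negative number is `0`, matching the convention for `η ≥ 1`). -/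
theorem stmt_12 {d k kbar : ℕ} (hd : 1 ≤ d) (hk : k ≤ d) (hkbar : kbar ≤ d)
    (U₁ : Matrix (Fin d) (Fin k) ℝ) (U₂ : Matrix (Fin d) (Fin (d - k)) ℝ)
    (hU : (Matrix.fromCols U₁ U₂)ᵀ * Matrix.fromCols U₁ U₂ = 1)
    (V₁ : Matrix (Fin d) (Fin kbar) ℝ) (V₂ : Matrix (Fin d) (Fin (d - kbar)) ℝ)
    (hV : (Matrix.fromCols V₁ V₂)ᵀ * Matrix.fromCols V₁ V₂ = 1)
    (η : ℝ) (hη : 0 ≤ η) (halign : specNorm (V₁ᵀ * U₂) ≤ η)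
    (z : Fin d → ℝ) (hz : evNorm z ≤ 1) :
    max 0 (Real.sqrt (1 - η ^ 2) * evNorm (U₂ᵀ *ᵥ z) - η) ≤ evNorm (V₂ᵀ *ᵥ z) := by
  -- Extract U₂ᵀ U₂ = 1
  have hU' := hU
  rw [Matrix.transpose_fromCols, Matrix.fromRows_mul_fromCols,
    ← Matrix.fromBlocks_one] at hU'
  have hU22 : U₂ᵀ * U₂ = 1 := by
    exact (Matrix.fromBlocks_inj.mp hU').2.2.2
  -- V V ᵀ = 1 in the form V₁ V₁ᵀ + V₂ V₂ᵀ = 1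
  have hV' := hV
  rw [Matrix.transpose_fromCols] at hV'
  have e : Fin d ≃ Fin kbar ⊕ Fin (d - kbar) :=
    (finCongr (by omega)).trans finSumFinEquiv.symm
  have hVVt : V₁ * V₁ᵀ + V₂ * V₂ᵀ = 1 := by
    have h1 : Matrix.fromCols V₁ V₂ * Matrix.fromRows V₁ᵀ V₂ᵀ = 1 :=
      (Matrix.fromCols_mul_fromRows_eq_one_comm e V₁ V₂ V₁ᵀ V₂ᵀ).mpr hV'
    rwa [Matrix.fromCols_mul_fromRows] at h1
  -- decomposition of dot products via V
  have hdec : ∀ x y : Fin d → ℝ,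
      x ⬝ᵥ y = (V₁ᵀ *ᵥ x) ⬝ᵥ (V₁ᵀ *ᵥ y) + (V₂ᵀ *ᵥ x) ⬝ᵥ (V₂ᵀ *ᵥ y) := by
    intro x y
    rw [transpose_dot, transpose_dot, Matrix.mulVec_mulVec, Matrix.mulVec_mulVec,
      ← dotProduct_add, ← Matrix.add_mulVec, hVVt, Matrix.one_mulVec]
  -- contraction: ‖V₂ᵀ x‖ ≤ ‖x‖, ‖V₁ᵀ x‖ ≤ ‖x‖
  have hcontr2 : ∀ x : Fin d → ℝ, evNorm (V₂ᵀ *ᵥ x) ≤ evNorm x := by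
    intro x
    have h := hdec x x
    have h1 : (V₂ᵀ *ᵥ x) ⬝ᵥ (V₂ᵀ *ᵥ x) ≤ x ⬝ᵥ x := by
      have := evNorm_sq (V₁ᵀ *ᵥ x)
      nlinarith [sq_nonneg (evNorm (V₁ᵀ *ᵥ x))]
    have := Real.sqrt_le_sqrt ((evNorm_sq (V₂ᵀ *ᵥ x)).symm ▸ (evNorm_sq x).symm ▸ h1)
    rwa [Real.sqrt_sq (evNorm_nonneg _), Real.sqrt_sq (evNorm_nonneg _)] at this
  have hcontr1 : ∀ x : Fin d → ℝ, evNorm (V₁ᵀ *ᵥ x) ≤ evNorm x := by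
    intro x
    have h := hdec x x
    have h1 : (V₁ᵀ *ᵥ x) ⬝ᵥ (V₁ᵀ *ᵥ x) ≤ x ⬝ᵥ x := by
      have := evNorm_sq (V₂ᵀ *ᵥ x)
      nlinarith [sq_nonneg (evNorm (V₂ᵀ *ᵥ x))]
    have := Real.sqrt_le_sqrt ((evNorm_sq (V₁ᵀ *ᵥ x)).symm ▸ (evNorm_sq x).symm ▸ h1)
    rwa [Real.sqrt_sq (evNorm_nonneg _), Real.sqrt_sq (evNorm_nonneg _)] at this
  set w : Fin (d - k) → ℝ := U₂ᵀ *ᵥ z with hw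
  set a : ℝ := evNorm w with ha
  set b : ℝ := evNorm (V₂ᵀ *ᵥ z) with hb
  have ha0 : 0 ≤ a := evNorm_nonneg _
  have hb0 : 0 ≤ b := evNorm_nonneg _
  -- ‖U₂ w‖ = ‖w‖
  have hUiso : evNorm (U₂ *ᵥ w) = a := by
    have h1 : (U₂ *ᵥ w) ⬝ᵥ (U₂ *ᵥ w) = w ⬝ᵥ w := by
      rw [← transpose_dot U₂ (U₂ *ᵥ w) w, Matrix.mulVec_mulVec, hU22, Matrix.one_mulVec]
    have := congrArg Real.sqrt ((evNorm_sq (U₂ *ᵥ w)).symm ▸ (evNorm_sq w).symm ▸ h1)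
    rwa [Real.sqrt_sq (evNorm_nonneg _), Real.sqrt_sq (evNorm_nonneg _)] at this
  -- key: a ^ 2 ≤ η * a + b * a
  have hkey : a ^ 2 ≤ η * a + b * a := by
    have h1 : a ^ 2 = z ⬝ᵥ (U₂ *ᵥ w) := by
      rw [ha, evNorm_sq, hw, transpose_dot]
    have h2 : z ⬝ᵥ (U₂ *ᵥ w)
        = (V₁ᵀ *ᵥ z) ⬝ᵥ (V₁ᵀ *ᵥ (U₂ *ᵥ w)) + (V₂ᵀ *ᵥ z) ⬝ᵥ (V₂ᵀ *ᵥ (U₂ *ᵥ w)) :=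
      hdec z (U₂ *ᵥ w)
    have ht1 : (V₁ᵀ *ᵥ z) ⬝ᵥ (V₁ᵀ *ᵥ (U₂ *ᵥ w)) ≤ η * a := by
      have hcs := dot_le (V₁ᵀ *ᵥ z) (V₁ᵀ *ᵥ (U₂ *ᵥ w))
      have hz1 : evNorm (V₁ᵀ *ᵥ z) ≤ 1 := (hcontr1 z).trans hz
      have hspec : evNorm (V₁ᵀ *ᵥ (U₂ *ᵥ w)) ≤ η * a := by
        rw [Matrix.mulVec_mulVec]
        calc evNorm ((V₁ᵀ * U₂) *ᵥ w) ≤ specNorm (V₁ᵀ * U₂) * evNorm w :=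
              evNorm_mulVec_le _ _
          _ ≤ η * a := by
              apply mul_le_mul_of_nonneg_right halign (evNorm_nonneg _) |>.trans
              rw [ha]
        
      calc (V₁ᵀ *ᵥ z) ⬝ᵥ (V₁ᵀ *ᵥ (U₂ *ᵥ w))
          ≤ evNorm (V₁ᵀ *ᵥ z) * evNorm (V₁ᵀ *ᵥ (U₂ *ᵥ w)) := hcs
        _ ≤ 1 * (η * a) := by
            apply mul_le_mul hz1 hspec (evNorm_nonneg _) zero_le_one
        _ = η * a := one_mul _
    have ht2 : (V₂ᵀ *ᵥ z) ⬝ᵥ (V₂ᵀ *ᵥ (U₂ *ᵥ w)) ≤ b * a := by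
      calc (V₂ᵀ *ᵥ z) ⬝ᵥ (V₂ᵀ *ᵥ (U₂ *ᵥ w))
          ≤ evNorm (V₂ᵀ *ᵥ z) * evNorm (V₂ᵀ *ᵥ (U₂ *ᵥ w)) := dot_le _ _
        _ ≤ b * a := by
            apply mul_le_mul_of_nonneg_left _ hb0
            exact (hcontr2 (U₂ *ᵥ w)).trans_eq hUiso
    linarith [h1, h2, ht1, ht2]
  -- conclude a ≤ η + b
  have hab : a ≤ η + b := by nlinarith
  have hsqrt1 : Real.sqrt (1 - η ^ 2) ≤ 1 := by
    have h := Real.sqrt_le_sqrt (show 1 - η ^ 2 ≤ 1 by nlinarith)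
    simpa using h
  apply max_le hb0
  have : Real.sqrt (1 - η ^ 2) * a ≤ a :=
    (mul_le_mul_of_nonneg_right hsqrt1 ha0).trans_eq (one_mul a)
  linarith
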